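/- Let σ(z) and τ(z) be polynomials with deg σ ≤ 2 and deg τ ≤ 1, and let a_1,…,a_M be pairwise distinct complex numbers satisfying the stationary system τ(a_k) + 2σ(a_k)·∑_{j≠k} 1/(a_k − a_j) = 0 for all k. Then the monic polynomial p(z) = ∏_{j=1}^{M}(z − a_j) satisfies the hypergeometric-type equation σ(z)p'' + τ(z)p' + λ_M p = 0 with λ_M = −(M(M−1)/2)·σ'' − M·τ'. -/

import Mathlib

open Polynomial

private lemma derivative_finset_prod' {ι : Type*} [DecidableEq ι] (s : Finset ι)
    (f : ι → Polynomial ℂ) :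
    derivative (∏ j ∈ s, f j) = ∑ j ∈ s, (∏ i ∈ s.erase j, f i) * derivative (f j) := by
  classical
  induction s using Finset.induction_on with
  | empty => simp
  | @insert c s hc ih =>
    rw [Finset.prod_insert hc, derivative_mul, ih, Finset.sum_insert hc,
      Finset.erase_insert hc, Finset.mul_sum]
    refine congr_arg₂ (· + ·) (mul_comm _ _) (Finset.sum_congr rfl fun j hj => ?_)
    have hjc : j ≠ c := fun h => hc (h ▸ hj)
    rw [Finset.erase_insert_of_ne (Ne.symm hjc), Finset.prod_insert (fun h => hc (Finset.mem_of_mem_erase h))]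
    ring

/-- If pairwise distinct `a_1,…,a_M` satisfy the stationary system
`τ(a_k) + 2σ(a_k) ∑_{j≠k} 1/(a_k − a_j) = 0`, then `p = ∏ (X − a_j)` satisfies
`σ p'' + τ p' + λ_M p = 0` with `λ_M = −(M(M−1)/2)σ'' − M τ'`. -/
theorem stationary_system_hypergeometric (M : ℕ) (σ τ : Polynomial ℂ)
    (hσ : σ.degree ≤ 2) (hτ : τ.degree ≤ 1)
    (a : Fin M → ℂ) (ha : Function.Injective a)
    (hstat : ∀ k : Fin M,
      τ.eval (a k) + 2 * σ.eval (a k) * ∑ j ∈ Finset.univ.erase k, 1 / (a k - a j) = 0)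
    (p : Polynomial ℂ) (hp : p = ∏ j, (X - C (a j)))
    (lamM : ℂ)
    (hlam : lamM = -((M : ℂ) * ((M : ℂ) - 1) / 2) * (derivative (derivative σ)).coeff 0
        - (M : ℂ) * (derivative τ).coeff 0) :
    σ * derivative (derivative p) + τ * derivative p + C lamM * p = 0 := by
  classical
  -- trivial case M = 0
  rcases Nat.eq_zero_or_pos M with hM0 | hM
  · subst hM0
    have hp1 : p = 1 := by simpa using hp
    have hl0 : lamM = 0 := by simp [hlam]
    simp [hp1, hl0]
  -- basic facts about p
  have hpm : p.Monic := by
    rw [hp]; exact monic_prod_of_monic _ _ fun j _ => monic_X_sub_C _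
  have hpd : p.natDegree = M := by
    rw [hp, natDegree_prod_of_monic _ _ fun j _ => monic_X_sub_C _]
    simp
  have hσn : σ.natDegree ≤ 2 := natDegree_le_iff_degree_le.mpr hσ
  have hτn : τ.natDegree ≤ 1 := natDegree_le_iff_degree_le.mpr hτ
  have hd1 : (derivative p).natDegree ≤ M - 1 := by
    simpa [hpd] using natDegree_derivative_le p
  have hd2 : (derivative (derivative p)).natDegree ≤ M - 2 := by
    have := natDegree_derivative_le (derivative p)
    omega
  set q : Polynomial ℂ := σ * derivative (derivative p) + τ * derivative p + C lamM * p
    with hq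
  -- evaluation at the points a k
  have heval : ∀ k, q.eval (a k) = 0 := by
    intro k
    have hsplit : p = (X - C (a k)) * ∏ j ∈ Finset.univ.erase k, (X - C (a j)) := by
      rw [hp]
      exact (Finset.mul_prod_erase _ _ (Finset.mem_univ k)).symm
    set r : Polynomial ℂ := ∏ j ∈ Finset.univ.erase k, (X - C (a j)) with hr
    have hD1 : derivative p = r + (X - C (a k)) * derivative r := by
      rw [hsplit]; simp [derivative_mul]
    have hD2 : derivative (derivative p)
        = 2 * derivative r + (X - C (a k)) * derivative (derivative r) := by
      rw [hD1]; simp [derivative_mul]; all_goals ring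
    have hpe : p.eval (a k) = 0 := by rw [hsplit]; simp
    have hpe1 : (derivative p).eval (a k) = r.eval (a k) := by
      rw [hD1]; simp
    have hpe2 : (derivative (derivative p)).eval (a k) = 2 * (derivative r).eval (a k) := by
      rw [hD2]; simp
    have hre : r.eval (a k) = ∏ j ∈ Finset.univ.erase k, (a k - a j) := by
      simp [hr, eval_prod]
    have hdre : (derivative r).eval (a k)
        = r.eval (a k) * ∑ j ∈ Finset.univ.erase k, 1 / (a k - a j) := by
      rw [hr, derivative_finset_prod']
      rw [Finset.mul_sum]
      simp only [derivative_sub, derivative_X, derivative_C, sub_zero, mul_one, eval_finset_sum]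
      refine Finset.sum_congr rfl fun j hj => ?_
      have hjk : a k - a j ≠ 0 := by
        have : j ≠ k := Finset.ne_of_mem_erase hj
        exact sub_ne_zero.mpr fun h => this (ha h.symm)
      have hfact : (∏ i ∈ (Finset.univ.erase k).erase j, (a k - a i)) * (a k - a j)
          = ∏ i ∈ Finset.univ.erase k, (a k - a i) :=
        Finset.prod_erase_mul _ _ hj
      rw [eval_prod]
      simp only [eval_sub, eval_X, eval_C, hre]
      field_simp
      simp [eval_prod]
      exact hfact
    have hst := hstat k
    rw [hq]
    simp only [eval_add, eval_mul, eval_C, hpe, hpe1, hpe2, hdre, mul_zero, add_zero]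
    linear_combination r.eval (a k) * hst
  -- the coefficient of degree M vanishes
  have hcoeffM : q.coeff M = 0 := by
    have hσ'' : (derivative (derivative σ)).coeff 0 = 2 * σ.coeff 2 := by
      simp [coeff_derivative]; ring
    have hτ' : (derivative τ).coeff 0 = τ.coeff 1 := by
      simp [coeff_derivative]
    have hpM : p.coeff M = 1 := by
      simpa [hpd] using hpm.coeff_natDegree
    rcases Nat.lt_or_ge M 2 with hM2 | hM2
    · -- M = 1
      have hM1 : M = 1 := by omega
      subst hM1
      have hD0 : derivative p = C ((derivative p).coeff 0) :=
        eq_C_of_natDegree_le_zero (by omega)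
      have hDD : derivative (derivative p) = 0 := by rw [hD0]; simp
      have hD0' : (derivative p).coeff 0 = 1 := by
        simpa [coeff_derivative] using (by simpa using hpM : p.coeff 1 = 1)
      have h1 : (τ * derivative p).coeff 1 = τ.coeff 1 := by
        rw [hD0, hD0']; simp
      simp only [hq, coeff_add, hDD, mul_zero, coeff_zero, zero_add, h1, coeff_C_mul, hpM,
        mul_one, hlam, hτ']
      push_cast
      ring
    · obtain ⟨N, rfl⟩ : ∃ N, M = N + 2 := ⟨M - 2, by omega⟩
      have hc2 : (σ * derivative (derivative p)).coeff (N + 2)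
          = σ.coeff 2 * (derivative (derivative p)).coeff N := by
        have := coeff_mul_add_eq_of_natDegree_le (f := σ) (g := derivative (derivative p))
          (df := 2) (dg := N) hσn (by omega)
        simpa [show 2 + N = N + 2 by ring] using this
      have hc1 : (τ * derivative p).coeff (N + 2)
          = τ.coeff 1 * (derivative p).coeff (N + 1) := by
        have := coeff_mul_add_eq_of_natDegree_le (f := τ) (g := derivative p)
          (df := 1) (dg := N + 1) hτn (by omega)
        simpa [show 1 + (N + 1) = N + 2 by ring] using this
      have hdp1 : (derivative p).coeff (N + 1) = ((N : ℂ) + 2) := by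
        rw [coeff_derivative, hpM]
        push_cast; ring
      have hdp2 : (derivative (derivative p)).coeff N = ((N : ℂ) + 2) * ((N : ℂ) + 1) := by
        rw [coeff_derivative, hdp1]
      simp only [hq, coeff_add, hc2, hc1, hdp1, hdp2, coeff_C_mul, hpM, mul_one, hlam, hσ'', hτ']
      push_cast
      ring
  -- degree bound
  have hdegle : q.degree ≤ (M : ℕ) := by
    have hbp : p.degree ≤ (M : ℕ) := by
      simpa [hpd] using degree_le_natDegree (p := p)
    have hb1 : (τ * derivative p).degree ≤ (M : ℕ) := by
      refine (degree_mul_le _ _).trans ?_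
      calc τ.degree + (derivative p).degree ≤ (1 : ℕ) + ((M - 1 : ℕ) : WithBot ℕ) := by
            exact add_le_add hτ ((degree_le_natDegree).trans (by exact_mod_cast hd1))
        _ ≤ (M : ℕ) := by
            rw [← Nat.cast_add]
            exact_mod_cast (by omega : 1 + (M - 1) ≤ M)
    have hb2 : (σ * derivative (derivative p)).degree ≤ (M : ℕ) := by
      rcases Nat.lt_or_ge M 2 with hM2 | hM2
      · have hM1 : M = 1 := by omega
        have hD0 : derivative p = C ((derivative p).coeff 0) :=
          eq_C_of_natDegree_le_zero (by omega)
        have hDD : derivative (derivative p) = 0 := by rw [hD0]; simp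
        rw [hDD, mul_zero]
        simp
      · refine (degree_mul_le _ _).trans ?_
        calc σ.degree + (derivative (derivative p)).degree
            ≤ (2 : ℕ) + ((M - 2 : ℕ) : WithBot ℕ) := by
              exact add_le_add hσ ((degree_le_natDegree).trans (by exact_mod_cast hd2))
          _ ≤ (M : ℕ) := by
              rw [← Nat.cast_add]
              exact_mod_cast (by omega : 2 + (M - 2) ≤ M)
    have hb3 : (C lamM * p).degree ≤ (M : ℕ) :=
      (degree_mul_le _ _).trans (by
        calc (C lamM).degree + p.degree ≤ 0 + (M : ℕ) := add_le_add degree_C_le hbp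
          _ = (M : ℕ) := by simp)
    exact (degree_add_le _ _).trans (max_le ((degree_add_le _ _).trans (max_le hb2 hb1)) hb3)
  -- conclude q = 0
  by_cases hq0 : q = 0
  · exact hq0
  have hdeglt : q.degree < (M : ℕ) := by
    refine lt_of_le_of_ne hdegle fun h => ?_
    have hnd : q.natDegree = M := natDegree_eq_of_degree_eq_some h
    exact hq0 (leadingCoeff_eq_zero.mp (by rwa [leadingCoeff, hnd]))
  have hnat : q.natDegree < M := by
    rwa [← natDegree_lt_iff_degree_lt hq0] at hdeglt
  exact absurd (eq_zero_of_natDegree_lt_card_of_eval_eq_zero q ha heval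
    (by simpa using hnat)) hq0
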